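/- arXiv:1211.6639 — 2 statements merged into one kernel-verified Lean document; each statement's English description precedes it below -/
import Mathlib

section
/- For all n ≥ 0, the Bernoulli polynomial B_n(x) satisfies B_n(x) = E_n(x) + Σ_{k=0}^{n-2} C(n,k)·B_{n-k}·E_k(x), where B_j = B_j(0) are the Bernoulli numbers and E_k(x) are the Euler polynomials. -/
open Polynomial Finset

/-- Euler polynomials `E_n(x)`, defined over `ℚ` by the recurrence
`E_n(x) = x^n - (1/2) ∑_{k<n} C(n,k) E_k(x)`, equivalent to the
generating function `(2/(e^t+1)) e^{xt} = ∑ E_n(x) t^n/n!`. -/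
noncomputable def eulerPoly : ℕ → ℚ[X]
  | n => X ^ n - Polynomial.C (1/2 : ℚ) *
      ∑ k : Fin n, Polynomial.C (n.choose k : ℚ) * eulerPoly k

/-- Euler polynomials of order `r`, `E_n^{(r)}(x)`, with generating function
`(2/(e^t+1))^r e^{xt}`; defined by Cauchy-product recursion on `r`, using the
Euler numbers `E_k = E_k(0)`. -/
noncomputable def eulerPolyOrder : ℕ → ℕ → ℚ[X]
  | 0, n => X ^ n
  | r+1, n => ∑ k ∈ Finset.range (n+1),
      Polynomial.C ((n.choose k : ℚ) * (eulerPoly k).eval 0) * eulerPolyOrder r (n-k)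

lemma eulerPoly_def (m : ℕ) : eulerPoly m = X ^ m - Polynomial.C (1/2 : ℚ) *
    ∑ k ∈ Finset.range m, Polynomial.C (m.choose k : ℚ) * eulerPoly k := by
  rw [eulerPoly]
  congr 2
  exact Fin.sum_univ_eq_sum_range (fun k => Polynomial.C (m.choose k : ℚ) * eulerPoly k) m

lemma xpow_eq_euler (m : ℕ) :
    (X : ℚ[X]) ^ m = Polynomial.C (1/2 : ℚ) * eulerPoly m +
      Polynomial.C (1/2 : ℚ) * ∑ k ∈ Finset.range (m+1),
        Polynomial.C (m.choose k : ℚ) * eulerPoly k := by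
  have h : (2:ℚ[X]) * Polynomial.C (1/2:ℚ) = 1 := by
    have : (2:ℚ[X]) = Polynomial.C (2:ℚ) := by
      rw [map_ofNat]
    rw [this, ← Polynomial.C_mul]; norm_num
  rw [sum_range_succ, Nat.choose_self, eulerPoly_def m]
  push_cast
  simp only [Nat.cast_one, map_one, mul_one]
  linear_combination (Polynomial.C (1/2:ℚ) * (∑ k ∈ Finset.range m, Polynomial.C (m.choose k : ℚ) * eulerPoly k) - X ^ m) * h

lemma choose_aux {n i k : ℕ} (h : i + k ≤ n) :
    (n.choose i) * ((n-i).choose k) = (n.choose k) * ((n-k).choose i) := by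
  have h1 := Nat.choose_mul (n := n) (Nat.le_add_right i k)
  have h2 := Nat.choose_mul (n := n) (Nat.le_add_left k i)
  rw [Nat.add_sub_cancel_left] at h1
  rw [Nat.add_sub_cancel] at h2
  have h3 : (i+k).choose i = (i+k).choose k := by
    have := Nat.choose_symm (Nat.le_add_left k i)
    rwa [Nat.add_sub_cancel] at this
  rw [← h1, h3, h2]

lemma bernoulli_full (n : ℕ) :
    Polynomial.bernoulli n = ∑ k ∈ Finset.range (n+1),
      Polynomial.C ((n.choose k : ℚ) * _root_.bernoulli (n-k)
        + (if n - k = 1 then (n:ℚ)/2 else 0)) * eulerPoly k := by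
  have e1 : Polynomial.bernoulli n
      = (∑ i ∈ range (n+1),
          Polynomial.C (_root_.bernoulli i * (n.choose i) * (1/2:ℚ)) * eulerPoly (n-i))
      + ∑ i ∈ range (n+1), ∑ k ∈ range (n-i+1),
          Polynomial.C (_root_.bernoulli i * (n.choose i) * (1/2:ℚ) * ((n-i).choose k))
            * eulerPoly k := by
    rw [Polynomial.bernoulli, ← sum_add_distrib]
    refine sum_congr rfl fun i _ => ?_
    rw [← Polynomial.C_mul_X_pow_eq_monomial, xpow_eq_euler (n-i)]
    simp only [mul_add, Finset.mul_sum, Polynomial.C_mul]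
    congr 1
    · ring
    · exact sum_congr rfl fun k _ => by ring
  have e2 : (∑ i ∈ range (n+1),
        Polynomial.C (_root_.bernoulli i * (n.choose i) * (1/2:ℚ)) * eulerPoly (n-i))
      = ∑ k ∈ range (n+1),
          Polynomial.C (_root_.bernoulli (n-k) * (n.choose k) * (1/2:ℚ)) * eulerPoly k := by
    rw [← Finset.sum_range_reflect]
    refine sum_congr rfl fun j hj => ?_
    rw [mem_range, Nat.lt_succ_iff] at hj
    have h1 : n + 1 - 1 - j = n - j := by omega
    rw [h1, Nat.sub_sub_self hj, Nat.choose_symm hj]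
  have e3 : (∑ i ∈ range (n+1), ∑ k ∈ range (n-i+1),
        Polynomial.C (_root_.bernoulli i * (n.choose i) * (1/2:ℚ) * ((n-i).choose k))
          * eulerPoly k)
      = ∑ k ∈ range (n+1),
          Polynomial.C ((1/2:ℚ) * (n.choose k)
            * ((if n - k = 1 then (1:ℚ) else 0) + _root_.bernoulli (n-k))) * eulerPoly k := by
    rw [Finset.sum_comm' (t' := range (n+1)) (s' := fun k => range (n - k + 1))
      (fun i k => by simp only [mem_range, Nat.lt_succ_iff]; omega)]
    refine sum_congr rfl fun k hk => ?_
    rw [mem_range, Nat.lt_succ_iff] at hk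
    rw [← Finset.sum_mul, ← map_sum]
    congr 2
    have hterm : ∀ i ∈ range (n-k+1),
        _root_.bernoulli i * (n.choose i : ℚ) * (1/2:ℚ) * (((n-i).choose k : ℕ) : ℚ)
        = ((1/2:ℚ) * (n.choose k)) * (((n-k).choose i : ℚ) * _root_.bernoulli i) := by
      intro i hi
      rw [mem_range, Nat.lt_succ_iff] at hi
      have hik : i + k ≤ n := by omega
      have hq : ((n.choose i : ℚ)) * (((n-i).choose k : ℚ))
          = ((n.choose k : ℚ)) * (((n-k).choose i : ℚ)) := by
        exact_mod_cast congrArg (Nat.cast : ℕ → ℚ) (choose_aux hik)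
      linear_combination (_root_.bernoulli i * (1/2:ℚ)) * hq
    rw [sum_congr rfl hterm, ← Finset.mul_sum]
    congr 1
    rw [sum_range_succ, Nat.choose_self, _root_.sum_bernoulli]
    push_cast
    ring
  rw [e1, e2, e3, ← sum_add_distrib]
  refine sum_congr rfl fun k hk => ?_
  rw [mem_range, Nat.lt_succ_iff] at hk
  rw [← add_mul, ← Polynomial.C_add]
  congr 2
  by_cases h : n - k = 1
  · rw [if_pos h, if_pos h]
    have hk1 : n = k + 1 := by omega
    have hnk : (n.choose k : ℚ) = n := by
      subst hk1
      rw [Nat.choose_succ_self_right]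
    rw [hnk, h, _root_.bernoulli_one]
    ring
  · rw [if_neg h, if_neg h]
    ring

theorem bernoulli_poly_eq_euler (n : ℕ) :
    Polynomial.bernoulli n =
      eulerPoly n +
        ∑ k ∈ Finset.range (n - 1),
          Polynomial.C ((n.choose k : ℚ) * _root_.bernoulli (n - k)) * eulerPoly k := by
  match n with
  | 0 =>
    rw [bernoulli_full 0, sum_range_one]
    norm_num
  | 1 =>
    rw [bernoulli_full 1, sum_range_succ, sum_range_one]
    norm_num [_root_.bernoulli_one, _root_.bernoulli_zero]
  | (m+2) =>
    rw [bernoulli_full (m+2), sum_range_succ, sum_range_succ]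
    have hc1 : ((m+2:ℕ).choose (m+1) : ℚ) * _root_.bernoulli ((m+2) - (m+1))
        + (if (m+2) - (m+1) = 1 then ((m+2:ℕ):ℚ)/2 else 0) = 0 := by
      have h1 : (m+2) - (m+1) = 1 := by omega
      rw [h1, if_pos rfl, _root_.bernoulli_one, Nat.choose_succ_self_right]
      push_cast; ring
    have hc2 : ((m+2:ℕ).choose (m+2) : ℚ) * _root_.bernoulli ((m+2) - (m+2))
        + (if (m+2) - (m+2) = 1 then ((m+2:ℕ):ℚ)/2 else 0) = 1 := by
      simp [Nat.choose_self, _root_.bernoulli_zero]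
    rw [hc1, hc2]
    have hrest : ∑ k ∈ range (m+1),
        Polynomial.C (((m+2:ℕ).choose k : ℚ) * _root_.bernoulli ((m+2) - k)
          + (if (m+2) - k = 1 then ((m+2:ℕ):ℚ)/2 else 0)) * eulerPoly k
        = ∑ k ∈ range (m+1),
          Polynomial.C (((m+2:ℕ).choose k : ℚ) * _root_.bernoulli ((m+2) - k)) * eulerPoly k := by
      refine sum_congr rfl fun k hk => ?_
      rw [mem_range, Nat.lt_succ_iff] at hk
      have : ¬ ((m+2) - k = 1) := by omega
      rw [if_neg this, add_zero]
    rw [hrest]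
    simp only [Polynomial.C_1, one_mul, Polynomial.C_0, zero_mul, add_zero]
    have : (m + 2) - 1 = m + 1 := by omega
    rw [this]
    ring
end

section
/- For all n ≥ 0 and integers r, s ≥ 1, the Bernoulli polynomial of order s satisfies B_n^{(s)}(x) = (1/2^r)·Σ_{k=0}^{n} C(n,k)·(Σ_{l=0}^{r} C(r,l)·B_{n-k}^{(s)}(l))·E_k^{(r)}(x). -/
open Polynomial Finset

/-- Bernoulli polynomials of order `s`, with generating function
`(t/(e^t-1))^s e^{xt}`; defined by Cauchy-product recursion on `s`, using the
Bernoulli numbers `B_k = B_k(0)` (Mathlib's `bernoulli`). -/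
noncomputable def bernoulliPolyOrder : ℕ → ℕ → ℚ[X]
  | 0, n => X ^ n
  | s+1, n => ∑ k ∈ Finset.range (n+1),
      Polynomial.C ((n.choose k : ℚ) * _root_.bernoulli k) * bernoulliPolyOrder s (n-k)

namespace EAux

variable {A : Type*} [CommRing A] [Algebra ℚ A]

/-- Exponential generating function of a sequence. -/
noncomputable def egf (f : ℕ → A) : PowerSeries A :=
  PowerSeries.mk fun n => ((Nat.factorial n : ℚ))⁻¹ • f n

lemma coeff_egf (f : ℕ → A) (n : ℕ) :
    PowerSeries.coeff n (egf f) = ((Nat.factorial n : ℚ))⁻¹ • f n :=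
  PowerSeries.coeff_mk _ _

lemma egf_injective : Function.Injective (egf (A := A)) := by
  intro f g h
  funext n
  have := congrArg (PowerSeries.coeff n) h
  rw [coeff_egf, coeff_egf] at this
  have h2 := congrArg (fun x => ((Nat.factorial n : ℚ)) • x) this
  simpa [smul_smul, mul_inv_cancel₀
    (by exact_mod_cast Nat.factorial_ne_zero n : ((Nat.factorial n : ℚ)) ≠ 0)] using h2

lemma egf_mul (f g : ℕ → A) :
    egf f * egf g = egf fun n => ∑ k ∈ range (n+1), (n.choose k : ℚ) • (f k * g (n-k)) := by
  ext n
  rw [PowerSeries.coeff_mul, coeff_egf, Finset.smul_sum,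
    Finset.Nat.sum_antidiagonal_eq_sum_range_succ
      (fun i j => (PowerSeries.coeff i) (egf f) * (PowerSeries.coeff j) (egf g))]
  refine Finset.sum_congr rfl fun k hk => ?_
  have hk' : k ≤ n := Nat.lt_succ_iff.mp (mem_range.mp hk)
  rw [coeff_egf, coeff_egf, smul_mul_smul_comm, smul_smul]
  congr 1
  have h := Nat.choose_mul_factorial_mul_factorial hk'
  have h' : ((n.choose k : ℚ)) * (Nat.factorial k : ℚ) * (Nat.factorial (n-k) : ℚ)
      = (Nat.factorial n : ℚ) := by exact_mod_cast h
  have h1 : ((Nat.factorial k : ℚ)) ≠ 0 := by exact_mod_cast Nat.factorial_ne_zero k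
  have h2 : ((Nat.factorial (n-k) : ℚ)) ≠ 0 := by exact_mod_cast Nat.factorial_ne_zero (n-k)
  have h3 : ((Nat.factorial n : ℚ)) ≠ 0 := by exact_mod_cast Nat.factorial_ne_zero n
  field_simp
  linarith [h']

lemma egf_map {B : Type*} [CommRing B] [Algebra ℚ B] (φ : A →ₐ[ℚ] B) (f : ℕ → A) :
    PowerSeries.map (φ : A →+* B) (egf f) = egf fun n => φ (f n) := by
  ext n
  simp [PowerSeries.coeff_map, coeff_egf]

lemma egf_smul (q : ℚ) (f : ℕ → A) : egf (fun n => q • f n) = q • egf f := by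
  ext n
  rw [coeff_egf, PowerSeries.coeff_smul, coeff_egf, smul_comm]

lemma egf_add (f g : ℕ → A) : egf (fun n => f n + g n) = egf f + egf g := by
  ext n; simp [coeff_egf, smul_add]

lemma egf_sum {ι : Type*} (t : Finset ι) (F : ι → ℕ → A) :
    egf (fun n => ∑ l ∈ t, F l n) = ∑ l ∈ t, egf (F l) := by
  ext n; simp [coeff_egf, Finset.smul_sum]

lemma egf_pow_mul (a b : A) :
    egf (fun n => a ^ n) * egf (fun n => b ^ n) = egf fun n => (a + b) ^ n := by
  rw [egf_mul]
  refine congrArg egf (funext fun n => ?_)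
  rw [add_pow]
  refine Finset.sum_congr rfl fun k hk => ?_
  rw [Nat.cast_smul_eq_nsmul, nsmul_eq_mul]
  ring

lemma egf_zero_pow : egf (fun n => (0:A) ^ n) = 1 := by
  ext n
  rw [coeff_egf, PowerSeries.coeff_one]
  cases n with
  | zero => simp
  | succ m => simp

noncomputable def E1 : PowerSeries ℚ := egf fun _ => (1:ℚ)

lemma egf_one_eq_E1 : egf (fun n => (1:ℚ) ^ n) = E1 := by
  simp only [one_pow]; rfl

lemma egf_natpow (l : ℕ) : egf (fun n => ((l:ℚ))^n) = E1 ^ l := by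
  induction l with
  | zero => simpa using egf_zero_pow (A := ℚ)
  | succ m ih =>
    have := egf_pow_mul ((m:ℚ)) (1:ℚ)
    rw [egf_one_eq_E1] at this
    push_cast
    rw [← this, ih, pow_succ]

noncomputable def EX : PowerSeries ℚ[X] := egf fun n => (X:ℚ[X])^n
noncomputable def E1X : PowerSeries ℚ[X] := egf fun _ => (1:ℚ[X])

lemma eulerPoly_eq (n : ℕ) : eulerPoly n = X ^ n - Polynomial.C (1/2 : ℚ) *
    ∑ k ∈ range n, Polynomial.C (n.choose k : ℚ) * eulerPoly k := by
  rw [eulerPoly, Fin.sum_univ_eq_sum_range (fun k => Polynomial.C (n.choose k : ℚ) * eulerPoly k)]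

lemma euler_rel : egf eulerPoly * (E1X + 1) = (2:ℚ) • EX := by
  rw [mul_add, mul_one, E1X, egf_mul, ← egf_add, EX, ← egf_smul]
  refine congrArg egf (funext fun n => ?_)
  simp only [mul_one]
  rw [Finset.sum_range_succ, Nat.choose_self]
  simp only [Polynomial.smul_eq_C_mul]
  have hE := eulerPoly_eq n
  set S := ∑ k ∈ range n, Polynomial.C ((n.choose k : ℚ)) * eulerPoly k with hS
  have h : Polynomial.C (1/2:ℚ) * 2 = 1 := by
    rw [show (2:ℚ[X]) = Polynomial.C 2 from (map_ofNat Polynomial.C 2).symm, ← map_mul]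
    norm_num
  have h2 : Polynomial.C (2:ℚ) = 2 := map_ofNat _ 2
  simp only [Nat.cast_one, map_one, one_mul]
  linear_combination 2 * hE - S * h - X ^ n * h2

noncomputable def eser : PowerSeries ℚ := egf fun k => (eulerPoly k).eval 0
noncomputable def bser : PowerSeries ℚ := egf fun k => ((_root_.bernoulli k : ℚ))

lemma map_aeval_egf (x : ℚ) (f : ℕ → ℚ[X]) :
    PowerSeries.map ((Polynomial.aeval x : ℚ[X] →ₐ[ℚ] ℚ) : ℚ[X] →+* ℚ) (egf f)
      = egf fun n => (f n).eval x :=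
  egf_map (Polynomial.aeval x) f

lemma map_aeval_mapC (x : ℚ) (φ : PowerSeries ℚ) :
    PowerSeries.map ((Polynomial.aeval x : ℚ[X] →ₐ[ℚ] ℚ) : ℚ[X] →+* ℚ)
      (PowerSeries.map (algebraMap ℚ ℚ[X]) φ) = φ := by
  ext n
  simp [PowerSeries.coeff_map, Polynomial.algebraMap_eq]

lemma mapC_egf (f : ℕ → ℚ) :
    PowerSeries.map (algebraMap ℚ ℚ[X]) (egf f) = egf fun n => Polynomial.C (f n) := by
  have := egf_map (Algebra.ofId ℚ ℚ[X]) f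
  rw [show (↑(Algebra.ofId ℚ ℚ[X]) : ℚ →+* ℚ[X]) = algebraMap ℚ ℚ[X] from rfl] at this
  rw [this]
  refine congrArg egf (funext fun n => ?_)
  rw [show (Algebra.ofId ℚ ℚ[X]) (f n) = algebraMap ℚ ℚ[X] (f n) from rfl,
    Polynomial.algebraMap_eq]

lemma euler_rel' : egf eulerPoly * (E1X + 1) = egf fun n => (2:ℚ) • (X:ℚ[X])^n := by
  rw [euler_rel, EX, ← egf_smul]

lemma eser_rel : eser * (E1 + 1) = 2 := by
  have h := congrArg (PowerSeries.map ((Polynomial.aeval (0:ℚ) : ℚ[X] →ₐ[ℚ] ℚ) : ℚ[X] →+* ℚ))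
    euler_rel'
  rw [map_mul, map_add, map_one, E1X, map_aeval_egf, map_aeval_egf, map_aeval_egf] at h
  have e1 : (egf fun n => ((1:ℚ[X])).eval 0) = E1 := by
    refine congrArg egf (funext fun n => ?_); simp
  have e3 : (egf fun n => ((2:ℚ) • (X:ℚ[X])^n).eval 0) = 2 := by
    have : (fun n => ((2:ℚ) • (X:ℚ[X]) ^ n).eval 0) = fun n => (2:ℚ) • ((0:ℚ)) ^ n := by
      funext n; simp
    rw [this, egf_smul, egf_zero_pow, Algebra.smul_def, mul_one,
      show ((2:ℚ)) = ((2:ℕ):ℚ) by norm_num, map_natCast]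
    norm_num
  rw [e1, e3] at h
  exact h

lemma eser_pow (r : ℕ) : eser ^ r * (E1 + 1) ^ r = 2 ^ r := by
  rw [← mul_pow, eser_rel]

lemma egf_eulerPolyOrder (r : ℕ) :
    egf (eulerPolyOrder r) = (PowerSeries.map (algebraMap ℚ ℚ[X]) eser) ^ r * EX := by
  induction r with
  | zero =>
    rw [pow_zero, one_mul, EX]
    refine congrArg egf (funext fun n => ?_)
    rw [eulerPolyOrder]
  | succ r ih =>
    have hfam : (eulerPolyOrder (r+1)) = fun n => ∑ k ∈ range (n+1),
        (n.choose k : ℚ) • (Polynomial.C ((eulerPoly k).eval 0) * eulerPolyOrder r (n-k)) := by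
      funext n
      rw [eulerPolyOrder]
      refine Finset.sum_congr rfl fun k _ => ?_
      rw [Polynomial.C_mul, Polynomial.smul_eq_C_mul, mul_assoc]
    rw [hfam, ← egf_mul,
      show (egf fun k => Polynomial.C ((eulerPoly k).eval 0))
        = PowerSeries.map (algebraMap ℚ ℚ[X]) eser from (mapC_egf _).symm,
      ih, pow_succ]
    ring

lemma egf_bernoulliPolyOrder (s : ℕ) :
    egf (bernoulliPolyOrder s) = (PowerSeries.map (algebraMap ℚ ℚ[X]) bser) ^ s * EX := by
  induction s with
  | zero =>
    rw [pow_zero, one_mul, EX]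
    refine congrArg egf (funext fun n => ?_)
    rw [bernoulliPolyOrder]
  | succ s ih =>
    have hfam : (bernoulliPolyOrder (s+1)) = fun n => ∑ k ∈ range (n+1),
        (n.choose k : ℚ) • (Polynomial.C ((_root_.bernoulli k : ℚ)) * bernoulliPolyOrder s (n-k)) := by
      funext n
      rw [bernoulliPolyOrder]
      refine Finset.sum_congr rfl fun k _ => ?_
      rw [Polynomial.C_mul, Polynomial.smul_eq_C_mul, mul_assoc]
    rw [hfam, ← egf_mul,
      show (egf fun k => Polynomial.C ((_root_.bernoulli k : ℚ)))
        = PowerSeries.map (algebraMap ℚ ℚ[X]) bser from (mapC_egf _).symm,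
      ih, pow_succ]
    ring

/-- The auxiliary sequence `g_m = ∑_l C(r,l) B_m^{(s)}(l)`. -/
noncomputable def gfun (r s : ℕ) : ℕ → ℚ := fun m =>
  ∑ l ∈ range (r+1), (r.choose l : ℚ) * (bernoulliPolyOrder s m).eval (l : ℚ)

lemma sum_choose_E1_pow (r : ℕ) :
    ∑ l ∈ range (r+1), (r.choose l : ℚ) • E1 ^ l = (E1 + 1) ^ r := by
  rw [add_pow]
  refine Finset.sum_congr rfl fun l _ => ?_
  rw [Nat.cast_smul_eq_nsmul, nsmul_eq_mul, one_pow, mul_one]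
  ring

lemma egf_gfun (r s : ℕ) : egf (gfun r s) = bser ^ s * (E1 + 1) ^ r := by
  have hterm : ∀ l : ℕ, (egf fun m => (r.choose l : ℚ) * (bernoulliPolyOrder s m).eval (l : ℚ))
      = (r.choose l : ℚ) • (bser ^ s * E1 ^ l) := by
    intro l
    have h1 : (egf fun m => (bernoulliPolyOrder s m).eval (l : ℚ)) = bser ^ s * E1 ^ l := by
      rw [← map_aeval_egf (l : ℚ) (bernoulliPolyOrder s), egf_bernoulliPolyOrder, map_mul,
        map_pow, map_aeval_mapC]
      congr 1
      rw [EX, map_aeval_egf, ← egf_natpow]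
      refine congrArg egf (funext fun n => ?_)
      simp
    rw [← h1, ← egf_smul]
    refine congrArg egf (funext fun m => ?_)
    rw [smul_eq_mul]
  have : gfun r s = fun m => ∑ l ∈ range (r+1),
      (fun l m => (r.choose l : ℚ) * (bernoulliPolyOrder s m).eval (l : ℚ)) l m := rfl
  rw [this, egf_sum]
  simp only [hterm]
  rw [show (∑ l ∈ range (r+1), (r.choose l : ℚ) • (bser ^ s * E1 ^ l))
      = bser ^ s * ∑ l ∈ range (r+1), (r.choose l : ℚ) • E1 ^ l by
    rw [Finset.mul_sum]
    exact Finset.sum_congr rfl fun l _ => (mul_smul_comm _ _ _).symm]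
  rw [sum_choose_E1_pow]

lemma smul_two_pow (r : ℕ) (T : PowerSeries ℚ[X]) :
    ((1:ℚ)/2^r) • ((2:PowerSeries ℚ[X])^r * T) = T := by
  rw [Algebra.smul_def, show (2:PowerSeries ℚ[X]) = algebraMap ℚ _ 2 from (map_ofNat _ 2).symm,
    ← map_pow, ← mul_assoc, ← map_mul]
  norm_num

lemma main (r s : ℕ) : bernoulliPolyOrder s = fun n =>
    Polynomial.C ((1 : ℚ) / 2 ^ r) *
      ∑ k ∈ Finset.range (n + 1),
        Polynomial.C ((n.choose k : ℚ) * gfun r s (n - k)) * eulerPolyOrder r k := by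
  apply egf_injective
  have hfam : (fun n => Polynomial.C ((1 : ℚ) / 2 ^ r) *
      ∑ k ∈ Finset.range (n + 1),
        Polynomial.C ((n.choose k : ℚ) * gfun r s (n - k)) * eulerPolyOrder r k)
      = fun n => ((1:ℚ)/2^r) • ∑ k ∈ range (n+1),
        (n.choose k : ℚ) • (eulerPolyOrder r k * Polynomial.C (gfun r s (n-k))) := by
    funext n
    rw [← Polynomial.smul_eq_C_mul]
    congr 1
    refine Finset.sum_congr rfl fun k _ => ?_
    rw [Polynomial.C_mul, mul_assoc,
      mul_comm (Polynomial.C (gfun r s (n - k))) (eulerPolyOrder r k),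
      ← Polynomial.smul_eq_C_mul]
  rw [hfam, egf_smul, ← egf_mul (eulerPolyOrder r) (fun m => Polynomial.C (gfun r s m)), egf_eulerPolyOrder,
    show (egf fun m => Polynomial.C (gfun r s m))
      = PowerSeries.map (algebraMap ℚ ℚ[X]) (egf (gfun r s)) from (mapC_egf _).symm,
    egf_gfun, egf_bernoulliPolyOrder, map_mul, map_pow, map_pow]
  have key : (PowerSeries.map (algebraMap ℚ ℚ[X]) eser) ^ r
      * (PowerSeries.map (algebraMap ℚ ℚ[X]) (E1 + 1)) ^ r = (2:PowerSeries ℚ[X]) ^ r := by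
    rw [← mul_pow, ← map_mul, eser_rel,
      show (PowerSeries.map (algebraMap ℚ ℚ[X])) (2:PowerSeries ℚ) = 2 from map_ofNat _ 2]
  rw [show (PowerSeries.map (algebraMap ℚ ℚ[X]) eser) ^ r * EX
        * ((PowerSeries.map (algebraMap ℚ ℚ[X]) bser) ^ s
          * (PowerSeries.map (algebraMap ℚ ℚ[X]) (E1 + 1)) ^ r)
      = ((PowerSeries.map (algebraMap ℚ ℚ[X]) eser) ^ r
          * (PowerSeries.map (algebraMap ℚ ℚ[X]) (E1 + 1)) ^ r)
        * ((PowerSeries.map (algebraMap ℚ ℚ[X]) bser) ^ s * EX) by ring,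
    key, smul_two_pow]

end EAux

theorem bernoulli_poly_order_in_euler_order_basis (n r s : ℕ) (hr : 1 ≤ r) (hs : 1 ≤ s) :
    bernoulliPolyOrder s n =
      Polynomial.C ((1 : ℚ) / 2 ^ r) *
        ∑ k ∈ Finset.range (n + 1),
          Polynomial.C ((n.choose k : ℚ) *
              ∑ l ∈ Finset.range (r + 1),
                (r.choose l : ℚ) * (bernoulliPolyOrder s (n - k)).eval (l : ℚ)) *
            eulerPolyOrder r k := by
  have h := congrFun (EAux.main r s) n
  simpa [EAux.gfun] using h
end
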